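/- Let n and α be positive integers with n ≥ 4α, and let G be the cycle graph on vertex set ZMod n (vertices i and i+1 adjacent for all i) with all edge costs equal to 1. Let U be a nonempty proper subset of ZMod n such that the number of edges with exactly one endpoint in U is 2α, and such that no vertex v has both of its neighbors v−1 and v+1 on the opposite side of the cut from v. Suppose S, T are disjoint nonempty subsets of ZMod n such that (U, ZMod n ∖ U) is the unique minimum (S,T)-terminal cut. Then S contains every vertex of U that is an endpoint of an edge crossing the cut, and T contains every vertex of ZMod n ∖ U that is an endpoint of an edge crossing the cut; in particular |S| ≥ 2α and |T| ≥ 2α. -/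

import Mathlib

open Finset

variable {V : Type*} [Fintype V] [DecidableEq V]

/- The value of the cut `(U, Uᶜ)`: total cost of edges with exactly one endpoint in `U`. -/
open Classical in
noncomputable def cutVal (G : SimpleGraph V) (c : V → V → ℝ) (U : Finset V) : ℝ :=
  ∑ u ∈ U, ∑ v ∈ Uᶜ, if G.Adj u v then c u v else 0

/-- `(X, Xᶜ)` is an `(S,T)`-terminal cut: `S ⊆ X ⊆ Tᶜ`. -/
def IsTerminalCut (S T X : Finset V) : Prop := S ⊆ X ∧ X ⊆ Tᶜ

/-- `(X, Xᶜ)` is a minimum `(S,T)`-terminal cut. -/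
def IsMinTerminalCut (G : SimpleGraph V) (c : V → V → ℝ) (S T X : Finset V) : Prop :=
  IsTerminalCut S T X ∧ ∀ Y : Finset V, IsTerminalCut S T Y → cutVal G c X ≤ cutVal G c Y

/-- `(X, Xᶜ)` is the unique minimum `(S,T)`-terminal cut. -/
def IsUniqueMinTerminalCut (G : SimpleGraph V) (c : V → V → ℝ) (S T X : Finset V) : Prop :=
  IsMinTerminalCut G c S T X ∧ ∀ Y : Finset V, IsMinTerminalCut G c S T Y → Y = X

/-- The cycle graph on ZMod n: i and i+1 are adjacent for every i. -/
def cycleGraph (n : ℕ) : SimpleGraph (ZMod n) where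
  Adj i j := i ≠ j ∧ (j = i + 1 ∨ i = j + 1)
  symm := by
    constructor
    intro i j h
    exact ⟨h.1.symm, h.2.symm⟩
  loopless := by
    constructor
    intro i h
    exact h.1 rfl


section Helpers
variable {n : ℕ} [NeZero n]

lemma cycle_adj_iff (h1 : (1 : ZMod n) ≠ 0) {u v : ZMod n} :
    (cycleGraph n).Adj u v ↔ v = u + 1 ∨ v = u - 1 := by
  constructor
  · rintro ⟨hne, h | h⟩
    · exact Or.inl h
    · exact Or.inr (by rw [h]; ring)
  · rintro (h | h)
    · refine ⟨fun he => h1 ?_, Or.inl h⟩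
      rw [← he] at h; linear_combination -h
    · refine ⟨fun he => h1 ?_, Or.inr (by rw [h]; ring)⟩
      rw [← he] at h; linear_combination h

open Classical in
lemma nbr_sum (h1 : (1 : ZMod n) ≠ 0) (h2 : (2 : ZMod n) ≠ 0) (v : ZMod n)
    (W : Finset (ZMod n)) :
    (∑ w ∈ W, if (cycleGraph n).Adj v w then (1 : ℝ) else 0) =
      (if v + 1 ∈ W then 1 else 0) + (if v - 1 ∈ W then 1 else 0) := by
  have hne : v + 1 ≠ v - 1 := by
    intro h; exact h2 (by linear_combination h)
  have : ∀ w ∈ W, (if (cycleGraph n).Adj v w then (1 : ℝ) else 0) =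
      (if w = v + 1 then 1 else 0) + (if w = v - 1 then 1 else 0) := by
    intro w _
    rw [show ((cycleGraph n).Adj v w) = (w = v + 1 ∨ w = v - 1) from
      propext (cycle_adj_iff h1)]
    by_cases ha : w = v + 1 <;> by_cases hb : w = v - 1 <;> simp_all
  rw [Finset.sum_congr rfl this, Finset.sum_add_distrib,
    Finset.sum_ite_eq' W (v+1) (fun _ => (1:ℝ)), Finset.sum_ite_eq' W (v-1) (fun _ => (1:ℝ))]

open Classical in
lemma nbr_sum' (h1 : (1 : ZMod n) ≠ 0) (h2 : (2 : ZMod n) ≠ 0) (v : ZMod n)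
    (W : Finset (ZMod n)) :
    (∑ w ∈ W, if (cycleGraph n).Adj w v then (1 : ℝ) else 0) =
      (if v + 1 ∈ W then 1 else 0) + (if v - 1 ∈ W then 1 else 0) := by
  rw [← nbr_sum h1 h2 v W]
  exact Finset.sum_congr rfl fun w _ => if_congr ((cycleGraph n).adj_comm w v) rfl rfl

lemma cutVal_compl (G : SimpleGraph (ZMod n)) (U : Finset (ZMod n)) :
    cutVal G (fun _ _ => (1:ℝ)) Uᶜ = cutVal G (fun _ _ => (1:ℝ)) U := by
  classical
  simp only [cutVal, compl_compl]
  rw [Finset.sum_comm]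
  exact Finset.sum_congr rfl fun u _ => Finset.sum_congr rfl fun w _ =>
    if_congr (G.adj_comm w u) rfl rfl

open Classical in
lemma cutVal_cycle (h1 : (1 : ZMod n) ≠ 0) (h2 : (2 : ZMod n) ≠ 0)
    (W : Finset (ZMod n)) :
    cutVal (cycleGraph n) (fun _ _ => (1:ℝ)) W =
      ∑ u ∈ W, ((if u + 1 ∈ Wᶜ then (1:ℝ) else 0) + (if u - 1 ∈ Wᶜ then 1 else 0)) := by
  simp only [cutVal]
  exact Finset.sum_congr rfl fun u _ => nbr_sum h1 h2 u Wᶜ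

end Helpers


/-- Tightness of the main theorem: in the n-cycle with unit costs, for a cut (U, Uᶜ) of
value 2α in which no vertex has both neighbors on the opposite side, the only way to
recover (U, Uᶜ) as the unique minimum (S,T)-terminal cut forces S (resp. T) to contain all
endpoints of crossing edges inside U (resp. Uᶜ); in particular |S|, |T| ≥ 2α. -/
theorem cycle_tightness
    (n α : ℕ) [NeZero n] (hα : 0 < α) (hn : 4 * α ≤ n)
    (U : Finset (ZMod n)) (hUne : U.Nonempty) (hUp : U ≠ Finset.univ)
    (hd : cutVal (cycleGraph n) (fun _ _ => (1 : ℝ)) U = 2 * α)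
    (hcomp : ∀ v : ZMod n, (v ∈ U → (v - 1 ∈ U ∨ v + 1 ∈ U)) ∧
      (v ∉ U → (v - 1 ∉ U ∨ v + 1 ∉ U)))
    (S T : Finset (ZMod n)) (hSne : S.Nonempty) (hTne : T.Nonempty) (hST : Disjoint S T)
    (huniq : IsUniqueMinTerminalCut (cycleGraph n) (fun _ _ => (1 : ℝ)) S T U) :
    (∀ v ∈ U, (v - 1 ∉ U ∨ v + 1 ∉ U) → v ∈ S) ∧
    (∀ v ∈ Uᶜ, (v - 1 ∈ U ∨ v + 1 ∈ U) → v ∈ T) ∧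
    2 * α ≤ S.card ∧ 2 * α ≤ T.card := by
  classical
  obtain ⟨⟨⟨hSU, hUT⟩, hmin⟩, huni⟩ := huniq
  have hn4 : 4 ≤ n := le_trans (by omega) hn
  have h1 : (1 : ZMod n) ≠ 0 := by
    intro hh
    have h1' : ((1:ℕ) : ZMod n) = 0 := by exact_mod_cast hh
    have := Nat.le_of_dvd Nat.one_pos ((ZMod.natCast_eq_zero_iff 1 n).mp h1')
    omega
  have h2 : (2 : ZMod n) ≠ 0 := by
    intro hh
    have h2' : ((2:ℕ) : ZMod n) = 0 := by exact_mod_cast hh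
    have := Nat.le_of_dvd (by norm_num) ((ZMod.natCast_eq_zero_iff 2 n).mp h2')
    omega
  have hvm : ∀ v : ZMod n, v - 1 ≠ v := fun v h => h1 (by linear_combination -h)
  have hvp : ∀ v : ZMod n, v + 1 ≠ v := fun v h => h1 (by linear_combination h)
  -- exchange lemma: removing a boundary vertex of U keeps the cut value
  have key1 : ∀ v ∈ U, (v - 1 ∉ U ∨ v + 1 ∉ U) →
      cutVal (cycleGraph n) (fun _ _ => (1:ℝ)) (U.erase v)
        = cutVal (cycleGraph n) (fun _ _ => (1:ℝ)) U := by
    intro v hv hb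
    have hin := (hcomp v).1 hv
    have hvc : v ∉ Uᶜ := by simp [hv]
    simp only [cutVal, Finset.compl_erase]
    rw [Finset.sum_congr rfl (fun u _ => Finset.sum_insert hvc),
      Finset.sum_add_distrib, nbr_sum' h1 h2 v (U.erase v),
      Finset.sum_erase_eq_sub hv, nbr_sum h1 h2 v Uᶜ]
    simp only [Finset.mem_erase, Finset.mem_compl, hvp v, hvm v, Ne, not_false_iff,
      true_and]
    have hxor : (v - 1 ∈ U ∧ v + 1 ∉ U) ∨ (v - 1 ∉ U ∧ v + 1 ∈ U) := by tauto
    rcases hxor with ⟨h, h'⟩ | ⟨h, h'⟩ <;> simp [h, h'] <;> ring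
  have key2 : ∀ v : ZMod n, v ∉ U → (v - 1 ∈ U ∨ v + 1 ∈ U) →
      cutVal (cycleGraph n) (fun _ _ => (1:ℝ)) (insert v U)
        = cutVal (cycleGraph n) (fun _ _ => (1:ℝ)) U := by
    intro v hv hb
    have hout := (hcomp v).2 hv
    have hvc : v ∈ Uᶜ := by simp [hv]
    simp only [cutVal, Finset.compl_insert]
    rw [Finset.sum_insert hv, nbr_sum h1 h2 v (Uᶜ.erase v),
      Finset.sum_congr rfl (fun u (_ : u ∈ U) => Finset.sum_erase_eq_sub hvc
        (f := fun w => if (cycleGraph n).Adj u w then (1:ℝ) else 0)),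
      Finset.sum_sub_distrib, nbr_sum' h1 h2 v U]
    simp only [Finset.mem_erase, Finset.mem_compl, hvp v, hvm v, Ne, not_false_iff,
      true_and]
    have hxor : (v - 1 ∈ U ∧ v + 1 ∉ U) ∨ (v - 1 ∉ U ∧ v + 1 ∈ U) := by tauto
    rcases hxor with ⟨h, h'⟩ | ⟨h, h'⟩ <;> simp [h, h'] <;> ring
  have part1 : ∀ v ∈ U, (v - 1 ∉ U ∨ v + 1 ∉ U) → v ∈ S := by
    intro v hv hb
    by_contra hvS
    have hTC : IsTerminalCut S T (U.erase v) :=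
      ⟨fun x hx => Finset.mem_erase.mpr ⟨fun h => hvS (h ▸ hx), hSU hx⟩,
        (Finset.erase_subset v U).trans hUT⟩
    have heq := huni (U.erase v) ⟨hTC, fun Y hY => by
      rw [key1 v hv hb]; exact hmin Y hY⟩
    exact (Finset.erase_eq_self.mp heq) hv
  have part2 : ∀ v ∈ Uᶜ, (v - 1 ∈ U ∨ v + 1 ∈ U) → v ∈ T := by
    intro v hvc hb
    have hv : v ∉ U := Finset.mem_compl.mp hvc
    by_contra hvT
    have hTC : IsTerminalCut S T (insert v U) :=
      ⟨hSU.trans (Finset.subset_insert v U), fun x hx => by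
        rcases Finset.mem_insert.mp hx with rfl | hxU
        · exact Finset.mem_compl.mpr hvT
        · exact hUT hxU⟩
    have heq := huni (insert v U) ⟨hTC, fun Y hY => by
      rw [key2 v hv hb]; exact hmin Y hY⟩
    exact hv (Finset.insert_eq_self.mp heq)
  have hC : (U.filter (fun v => v - 1 ∉ U ∨ v + 1 ∉ U)).card = 2 * α := by
    have hh := hd
    rw [cutVal_cycle h1 h2 U] at hh
    have heq : ∀ u ∈ U, ((if u + 1 ∈ Uᶜ then (1:ℝ) else 0) + (if u - 1 ∈ Uᶜ then 1 else 0))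
        = (if (u - 1 ∉ U ∨ u + 1 ∉ U) then 1 else 0) := by
      intro u hu
      have hin := (hcomp u).1 hu
      simp only [Finset.mem_compl]
      by_cases ha : u - 1 ∈ U <;> by_cases hb : u + 1 ∈ U <;> simp_all
    rw [Finset.sum_congr rfl heq, Finset.sum_boole] at hh
    exact_mod_cast hh
  have hD : (Uᶜ.filter (fun v => v - 1 ∈ U ∨ v + 1 ∈ U)).card = 2 * α := by
    have hh : cutVal (cycleGraph n) (fun _ _ => (1:ℝ)) Uᶜ = 2 * α := by
      rw [cutVal_compl]; exact hd
    rw [cutVal_cycle h1 h2 Uᶜ] at hh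
    simp only [compl_compl] at hh
    have heq : ∀ u ∈ Uᶜ, ((if u + 1 ∈ U then (1:ℝ) else 0) + (if u - 1 ∈ U then 1 else 0))
        = (if (u - 1 ∈ U ∨ u + 1 ∈ U) then 1 else 0) := by
      intro u hu
      have hout := (hcomp u).2 (Finset.mem_compl.mp hu)
      by_cases ha : u - 1 ∈ U <;> by_cases hb : u + 1 ∈ U <;> simp_all
    rw [Finset.sum_congr rfl heq, Finset.sum_boole] at hh
    exact_mod_cast hh
  refine ⟨part1, part2, ?_, ?_⟩
  · rw [← hC]
    exact Finset.card_le_card fun x hx =>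
      part1 x (Finset.mem_filter.mp hx).1 (Finset.mem_filter.mp hx).2
  · rw [← hD]
    exact Finset.card_le_card fun x hx =>
      part2 x (Finset.mem_filter.mp hx).1 (Finset.mem_filter.mp hx).2
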